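/- arXiv:2206.13576 — 2 statements merged into one kernel-verified Lean document; each statement's English description precedes it below -/
import Mathlib

section
/- Under the factorized-metric consistency conditions, each product Λ_k = Z_k Z_{k−1} ⋯ Z_2 Z_1 (1 ≤ k ≤ N) is quasi-Hermitian with respect to the full metric Θ_N = Z_N Z_{N−1} ⋯ Z_1, i.e., Λ_k† Θ_N = Θ_N Λ_k. -/
open Matrix

/-- `prodDesc Z j N = Z_N * Z_{N-1} * ⋯ * Z_{j+1}` (descending indices). -/
noncomputable def prodDesc {n : ℕ} (Z : ℕ → Matrix (Fin n) (Fin n) ℂ) (j N : ℕ) :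
    Matrix (Fin n) (Fin n) ℂ :=
  (((List.range' (j + 1) (N - j)).reverse).map Z).prod

lemma prodDesc_self {n : ℕ} (Z : ℕ → Matrix (Fin n) (Fin n) ℂ) (N : ℕ) :
    prodDesc Z N N = 1 := by
  simp [prodDesc]

lemma prodDesc_step {n : ℕ} (Z : ℕ → Matrix (Fin n) (Fin n) ℂ) {j N : ℕ} (h : j < N) :
    prodDesc Z j N = prodDesc Z (j + 1) N * Z (j + 1) := by
  unfold prodDesc
  have h1 : N - j = (N - (j + 1)) + 1 := by omega
  have h2 : List.range' (j + 1) (N - j) = (j + 1) :: List.range' (j + 1 + 1) (N - (j + 1)) := by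
    rw [h1, List.range'_succ]
  rw [h2]
  simp

lemma prodDesc_cons {n : ℕ} (Z : ℕ → Matrix (Fin n) (Fin n) ℂ) (k : ℕ) :
    prodDesc Z 0 (k + 1) = Z (k + 1) * prodDesc Z 0 k := by
  unfold prodDesc
  simp only [Nat.sub_zero, Nat.zero_add]
  rw [List.range'_1_concat]
  simp [Nat.add_comm]

lemma lambda_conj_prod {n N : ℕ} (Z : ℕ → Matrix (Fin n) (Fin n) ℂ)
    (hZN : (Z N)ᴴ = Z N)
    (hcons : ∀ k, 1 ≤ k → k ≤ N - 1 →
      (Z k)ᴴ * prodDesc Z k N = prodDesc Z k N * Z k) :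
    ∀ k, k ≤ N → (prodDesc Z 0 k)ᴴ * prodDesc Z k N = prodDesc Z 0 N := by
  intro k
  induction k with
  | zero => intro _; simp [prodDesc]
  | succ k ih =>
    intro hk
    have comm : (Z (k + 1))ᴴ * prodDesc Z (k + 1) N = prodDesc Z (k + 1) N * Z (k + 1) := by
      rcases eq_or_lt_of_le hk with h | h
      · rw [h, prodDesc_self, mul_one, one_mul, hZN]
      · exact hcons (k + 1) (by omega) (by omega)
    calc (prodDesc Z 0 (k + 1))ᴴ * prodDesc Z (k + 1) N
        = (prodDesc Z 0 k)ᴴ * ((Z (k + 1))ᴴ * prodDesc Z (k + 1) N) := by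
          rw [prodDesc_cons, conjTranspose_mul, mul_assoc]
      _ = (prodDesc Z 0 k)ᴴ * (prodDesc Z (k + 1) N * Z (k + 1)) := by rw [comm]
      _ = (prodDesc Z 0 k)ᴴ * prodDesc Z k N := by rw [← prodDesc_step Z (by omega)]
      _ = prodDesc Z 0 N := ih (by omega)

lemma prodDesc_split {n N : ℕ} (Z : ℕ → Matrix (Fin n) (Fin n) ℂ) :
    ∀ k, k ≤ N → prodDesc Z 0 N = prodDesc Z k N * prodDesc Z 0 k := by
  intro k
  induction k with
  | zero => intro _; simp [prodDesc, Nat.zero_add]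
  | succ k ih =>
    intro hk
    rw [ih (by omega), prodDesc_step Z (show k < N by omega), prodDesc_cons,
      mul_assoc]

theorem lambdas_quasiHermitian
    {n N : ℕ} (Z : ℕ → Matrix (Fin n) (Fin n) ℂ)
    (hZN : (Z N)ᴴ = Z N)
    (hcons : ∀ k, 1 ≤ k → k ≤ N - 1 →
      (Z k)ᴴ * prodDesc Z k N = prodDesc Z k N * Z k) :
    ∀ k, 1 ≤ k → k ≤ N →
      (prodDesc Z 0 k)ᴴ * prodDesc Z 0 N = prodDesc Z 0 N * prodDesc Z 0 k := by
  intro k _ hkN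
  calc (prodDesc Z 0 k)ᴴ * prodDesc Z 0 N
      = (prodDesc Z 0 k)ᴴ * (prodDesc Z k N * prodDesc Z 0 k) := by
        rw [← prodDesc_split Z k hkN]
    _ = ((prodDesc Z 0 k)ᴴ * prodDesc Z k N) * prodDesc Z 0 k := by rw [mul_assoc]
    _ = prodDesc Z 0 N * prodDesc Z 0 k := by rw [lambda_conj_prod Z hZN hcons k hkN]
end

section
/- A matrix H is quasi-Hermitian with respect to some positive-definite Hermitian Θ if and only if H is similar to a Hermitian matrix. -/
open Matrix ComplexOrder

theorem quasiHermitian_iff_similar_hermitian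
    {n : ℕ} (H : Matrix (Fin n) (Fin n) ℂ) :
    (∃ Θ : Matrix (Fin n) (Fin n) ℂ, Θ.PosDef ∧ Hᴴ * Θ = Θ * H) ↔
      (∃ G K : Matrix (Fin n) (Fin n) ℂ, IsUnit G ∧ Kᴴ = K ∧ H = G⁻¹ * K * G) := by
  constructor
  · rintro ⟨Θ, hΘ, hcomm⟩
    set S := (open scoped MatrixOrder in CFC.sqrt Θ) with hSdef
    have hSS : S * S = Θ := by
      open scoped MatrixOrder in exact CFC.sqrt_mul_sqrt_self Θ hΘ.posSemidef.nonneg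
    have hSH : Sᴴ = S := by
      open scoped MatrixOrder in exact (CFC.sqrt_nonneg Θ).posSemidef.isHermitian
    have hdet : IsUnit S.det := by
      have h1 : IsUnit (S * S).det := hSS ▸ ((isUnit_iff_isUnit_det Θ).mp hΘ.isUnit)
      rw [det_mul] at h1
      exact (IsUnit.mul_iff.mp h1).1
    have hSu : IsUnit S := (isUnit_iff_isUnit_det S).mpr hdet
    have hinvH : (S⁻¹)ᴴ = S⁻¹ := by rw [conjTranspose_nonsing_inv, hSH]
    have key : Hᴴ * (S * S) = S * S * H := by rw [hSS]; exact hcomm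
    refine ⟨S, S * H * S⁻¹, hSu, ?_, ?_⟩
    · rw [conjTranspose_mul, conjTranspose_mul, hinvH, hSH]
      have h := congrArg (fun M => S⁻¹ * M * S⁻¹) key
      simp only [Matrix.mul_assoc] at h ⊢
      rw [Matrix.mul_nonsing_inv _ hdet, mul_one,
        Matrix.nonsing_inv_mul_cancel_left _ _ hdet] at h
      exact h
    · simp only [Matrix.mul_assoc]
      rw [Matrix.nonsing_inv_mul _ hdet, mul_one,
        Matrix.nonsing_inv_mul_cancel_left _ _ hdet]
  · rintro ⟨G, K, hG, hK, hH⟩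
    have hdet : IsUnit G.det := (isUnit_iff_isUnit_det G).mp hG
    have hdetH : IsUnit (Gᴴ).det := by rw [det_conjTranspose]; exact hdet.star
    refine ⟨Gᴴ * G, posDef_iff_dotProduct_mulVec.mpr ⟨isHermitian_conjTranspose_mul_self G, fun x hx => ?_⟩, ?_⟩
    · have hle := (posSemidef_conjTranspose_mul_self G).dotProduct_mulVec_nonneg x
      refine lt_of_le_of_ne hle fun h0 => ?_
      have hGx : G *ᵥ x ≠ 0 := fun h => hx (by
        have := congrArg (fun v => G⁻¹ *ᵥ v) h
        simpa [mulVec_mulVec, Matrix.nonsing_inv_mul _ hdet] using this)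
      apply hGx
      rw [← dotProduct_star_self_eq_zero (v := G *ᵥ x)]
      rw [star_mulVec, ← dotProduct_mulVec, mulVec_mulVec, ← h0]
    · rw [hH, conjTranspose_mul, conjTranspose_mul, hK, conjTranspose_nonsing_inv]
      simp only [Matrix.mul_assoc]
      rw [Matrix.nonsing_inv_mul_cancel_left _ _ hdetH,
        Matrix.mul_nonsing_inv_cancel_left _ _ hdet]
end
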